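/- Let r be a positive integer (or ∞), and let (A,B) be a partition of the vertex set of a graph G such that the equivalence relation ≡_{(A,B)} has k equivalence classes. If G[A] and G[B] each have a weak r-guidance system of maximum outdegree at most c, then G has a weak r-guidance system of maximum outdegree at most c + k. -/

import Mathlib

open SimpleGraph

variable {V : Type*}

/-- `H` is a partial orientation of `G`: every directed edge of `H` projects to an edge of `G`. -/
def IsPartialOrientation (G : SimpleGraph V) (H : V → V → Prop) : Prop :=
  ∀ ⦃u v⦄, H u v → G.Adj u v

/-- `oball H v a` is the set of vertices reachable from `v` in `H` by a directed path
of length at most `a`. -/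
def oball (H : V → V → Prop) (v : V) : ℕ → Set V
  | 0 => {v}
  | a + 1 => oball H v a ∪ {w | ∃ x ∈ oball H v a, H x w}

/-- `gate G u v` is the set of neighbors of `u` at distance `dist u v - 1` from `v`,
i.e. the possible second vertices of shortest `u`-`v` paths. -/
def gate (G : SimpleGraph V) (u v : V) : Set V :=
  {y | G.Adj u y ∧ G.dist y v = G.dist u v - 1}

/-- `H` is a weak `r`-guidance system of `G`: for distinct `u,v` at distance `ℓ ≤ r`
there are `a + b = ℓ - 1` and an edge of `G` between `oball H u a` and `oball H v b`. -/
def IsWeakGuidance (G : SimpleGraph V) (H : V → V → Prop) (r : ℕ) : Prop :=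
  ∀ u v : V, u ≠ v → G.Reachable u v → G.dist u v ≤ r →
    ∃ a b : ℕ, a + b = G.dist u v - 1 ∧ ∃ x ∈ oball H u a, ∃ y ∈ oball H v b, G.Adj x y

/-- Gate formulation of weak `r`-guidance systems: for `u,v` at distance `ℓ` with
`2 ≤ ℓ ≤ r`, `u` has an outneighbor in `gate G u v` or `v` has one in `gate G v u`. -/
def IsWeakGuidanceGate (G : SimpleGraph V) (H : V → V → Prop) (r : ℕ) : Prop :=
  ∀ u v : V, 2 ≤ G.dist u v → G.dist u v ≤ r →
    (∃ y ∈ gate G u v, H u y) ∨ (∃ y ∈ gate G v u, H v y)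

/-- The outdegree of `u` in the partial orientation `H`. -/
noncomputable def outdeg (H : V → V → Prop) (u : V) : ℕ := {v | H u v}.ncard

/-- Weak `r`-guidance system for `r : ℕ∞` (so `r = ⊤` is a weak `∞`-guidance system). -/
def IsWeakGuidanceGateE (G : SimpleGraph V) (H : V → V → Prop) (r : ℕ∞) : Prop :=
  ∀ u v : V, 2 ≤ G.dist u v → (G.dist u v : ℕ∞) ≤ r →
    (∃ y ∈ gate G u v, H u y) ∨ (∃ y ∈ gate G v u, H v y)

/-- `u ≡_{(A,Aᶜ)} v`: both in `A` with the same neighbors in `Aᶜ`, or both in `Aᶜ` with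
the same neighbors in `A`. -/
def crossEquiv (G : SimpleGraph V) (A : Set V) (u v : V) : Prop :=
  (u ∈ A ∧ v ∈ A ∧ ∀ w ∈ Aᶜ, (G.Adj u w ↔ G.Adj v w)) ∨
  (u ∈ Aᶜ ∧ v ∈ Aᶜ ∧ ∀ w ∈ A, (G.Adj u w ↔ G.Adj v w))

namespace PartitionWG

open SimpleGraph

variable {V : Type*} (G : SimpleGraph V) {k : ℕ} (f : V → Fin k)

/-- `w` is a first step from `u` on a shortest path to the nearest member of class `q`. -/
def Good (u : V) (q : Fin k) (w : V) : Prop :=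
  G.Adj u w ∧ ∃ x, f x = q ∧ G.Reachable w x ∧
    ∀ y, f y = q → G.Reachable u y → G.dist w x + 1 ≤ G.dist u y

open Classical in
/-- choice of a good step towards class `q`, if one exists -/
noncomputable def sig (u : V) (q : Fin k) : Option V :=
  if h : ∃ w, Good G f u q w then some h.choose else none

lemma sig_good {u : V} {q : Fin k} {w : V} (h : sig G f u q = some w) :
    Good G f u q w := by
  classical
  unfold sig at h
  by_cases h' : ∃ w', Good G f u q w'
  · rw [dif_pos h'] at h
    obtain rfl : h'.choose = w := by injection h
    exact h'.choose_spec
  · rw [dif_neg h'] at h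
    cases h

lemma exists_sig {u : V} {q : Fin k} (hne : f u ≠ q) {x : V} (hx : f x = q)
    (hr : G.Reachable u x) : ∃ w, sig G f u q = some w := by
  have hgood : ∃ w, Good G f u q w := by
    have hs : {n : ℕ | ∃ y, f y = q ∧ G.Reachable u y ∧ G.dist u y = n}.Nonempty :=
      ⟨G.dist u x, x, hx, hr, rfl⟩
    obtain ⟨y0, hy0, hry0, hd0⟩ := Nat.sInf_mem hs
    have hne0 : u ≠ y0 := by rintro rfl; exact hne hy0
    have hd1 : 0 < G.dist u y0 := hry0.pos_dist_of_ne hne0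
    obtain ⟨p, hp⟩ := hry0.exists_walk_length_eq_dist
    cases p with
    | nil => simp at hp; omega
    | @cons _ b _ hadj p' =>
      refine ⟨b, hadj, y0, hy0, p'.reachable, ?_⟩
      intro y hy hryu
      have h1 : G.dist b y0 ≤ p'.length := SimpleGraph.dist_le p'
      have h2 : p'.length + 1 = G.dist u y0 := by simpa using hp
      have h3 : G.dist u y0 ≤ G.dist u y := by
        rw [hd0]
        exact Nat.sInf_le ⟨y, hy, hryu, rfl⟩
      omega
  classical
  rw [sig, dif_pos hgood]
  exact ⟨_, rfl⟩

variable {A : Set V}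

lemma adj_transfer (hf : ∀ u v, crossEquiv G A u v ↔ f u = f v) {x x' z : V}
    (h : f x = f x') (hxz : G.Adj x z) (hcross : ¬((x ∈ A) ↔ (z ∈ A))) :
    G.Adj x' z := by
  rcases (hf x x').2 h with ⟨hx, hx', hiff⟩ | ⟨hx, hx', hiff⟩
  · have hz : z ∈ Aᶜ := by
      simp only [Set.mem_compl_iff]
      tauto
    exact (hiff z hz).1 hxz
  · have hz : z ∈ A := by
      simp only [Set.mem_compl_iff] at hx
      tauto
    exact (hiff z hz).1 hxz

lemma walk_decomp (A : Set V) {u v : V} (W : G.Walk u v) :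
    (∀ z ∈ W.support, (z ∈ A ↔ u ∈ A)) ∨
    ∃ (x y : V) (W1 : G.Walk u x) (W2 : G.Walk y v), G.Adj x y ∧
      ¬((x ∈ A) ↔ (y ∈ A)) ∧ W1.length + 1 + W2.length = W.length := by
  induction W with
  | nil =>
    left
    intro z hz
    simp only [SimpleGraph.Walk.support_nil, List.mem_singleton] at hz
    subst hz; rfl
  | @cons a b c hadj p ih =>
    by_cases hside : (b ∈ A) ↔ (a ∈ A)
    · rcases ih with hall | ⟨x, y, W1, W2, hxy, hc, hlen⟩
      · left
        intro z hz
        rw [SimpleGraph.Walk.support_cons] at hz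
        rcases List.mem_cons.1 hz with rfl | hz
        · rfl
        · exact (hall z hz).trans hside
      · right
        refine ⟨x, y, SimpleGraph.Walk.cons hadj W1, W2, hxy, hc, ?_⟩
        simp only [SimpleGraph.Walk.length_cons] at *
        omega
    · right
      refine ⟨a, b, SimpleGraph.Walk.nil, p, hadj, fun hi => hside hi.symm, ?_⟩
      simp [SimpleGraph.Walk.length_cons, SimpleGraph.Walk.length_nil]
      omega

lemma walk_lift {S : Set V} {a b : V} (W : G.Walk a b) :
    ∀ (_ : ∀ z ∈ W.support, z ∈ S) (ha : a ∈ S) (hb : b ∈ S),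
    ∃ W' : (G.induce S).Walk ⟨a, ha⟩ ⟨b, hb⟩, W'.length = W.length := by
  induction W with
  | nil =>
    intro _ ha hb
    exact ⟨SimpleGraph.Walk.nil, rfl⟩
  | @cons a b c hadj p ih =>
    intro hsup ha hb
    have hbS : b ∈ S := by
      apply hsup
      rw [SimpleGraph.Walk.support_cons]
      exact List.mem_cons_of_mem _ p.start_mem_support
    obtain ⟨W', hW'⟩ := ih (fun z hz => hsup z (by
      rw [SimpleGraph.Walk.support_cons]; exact List.mem_cons_of_mem _ hz)) hbS hb
    refine ⟨SimpleGraph.Walk.cons ?_ W', ?_⟩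
    · exact hadj
    · exact congrArg (· + 1) hW'

lemma walk_proj {S : Set V} {a b : ↥S} (W : (G.induce S).Walk a b) :
    ∃ W' : G.Walk a.val b.val, W'.length = W.length :=
  ⟨W.map (SimpleGraph.Embedding.induce S).toHom, by exact SimpleGraph.Walk.length_map (p := W) (f := _)⟩

lemma mem_gate {u w v : V} (hadj : G.Adj u w) (hrw : G.Reachable w v)
    (hle : G.dist w v + 1 ≤ G.dist u v) : w ∈ gate G u v := by
  obtain ⟨p, hp⟩ := hrw.exists_walk_length_eq_dist
  have h2 : G.dist u v ≤ p.length + 1 := by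
    simpa [SimpleGraph.Walk.length_cons] using SimpleGraph.dist_le (SimpleGraph.Walk.cons hadj p)
  rw [hp] at h2
  exact ⟨hadj, by omega⟩

lemma cross_case (hf : ∀ u v, crossEquiv G A u v ↔ f u = f v)
    {u v x y : V} (W1 : G.Walk u x) (W2 : G.Walk y v)
    (hxy : G.Adj x y) (hc : ¬((x ∈ A) ↔ (y ∈ A)))
    (hlen : W1.length + 1 + W2.length = G.dist u v)
    (ht : 1 ≤ W1.length) (hl : 2 ≤ G.dist u v) :
    ∃ w, w ∈ gate G u v ∧ ∃ q, sig G f u q = some w := by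
  have hqu : f u ≠ f x := by
    intro hq
    have hadj : G.Adj u y := adj_transfer G f hf hq.symm hxy hc
    have hd : G.dist u v ≤ W2.length + 1 := by
      simpa [SimpleGraph.Walk.length_cons] using
        SimpleGraph.dist_le (SimpleGraph.Walk.cons hadj W2)
    omega
  obtain ⟨w, hw⟩ := exists_sig G f hqu rfl W1.reachable
  obtain ⟨hadjw, x', hx', hrwx', hmin⟩ := sig_good G f hw
  have h1 : G.dist w x' + 1 ≤ G.dist u x := hmin x rfl W1.reachable
  have h2 : G.dist u x ≤ W1.length := SimpleGraph.dist_le W1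
  have hadjx' : G.Adj x' y := adj_transfer G f hf hx'.symm hxy hc
  obtain ⟨p0, hp0⟩ := hrwx'.exists_walk_length_eq_dist
  have hdwv : G.dist w v ≤ G.dist w x' + (W2.length + 1) := by
    have := SimpleGraph.dist_le (p0.append (SimpleGraph.Walk.cons hadjx' W2))
    simpa [SimpleGraph.Walk.length_append, SimpleGraph.Walk.length_cons, hp0,
      Nat.add_assoc] using this
  refine ⟨w, mem_gate G hadjw (p0.append (SimpleGraph.Walk.cons hadjx' W2)).reachable
    (by omega), f x, hw⟩

lemma side_case {S : Set V} {HS : ↥S → ↥S → Prop} {r : ℕ∞}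
    (hGS : IsWeakGuidanceGateE (G.induce S) HS r)
    {u v : V} (W : G.Walk u v) (hsup : ∀ z ∈ W.support, z ∈ S)
    (hlen : W.length = G.dist u v) (hl : 2 ≤ G.dist u v) (hle : (G.dist u v : ℕ∞) ≤ r) :
    (∃ w, w ∈ gate G u v ∧ ∃ (hu : u ∈ S) (hw : w ∈ S), HS ⟨u, hu⟩ ⟨w, hw⟩) ∨
    (∃ w, w ∈ gate G v u ∧ ∃ (hv : v ∈ S) (hw : w ∈ S), HS ⟨v, hv⟩ ⟨w, hw⟩) := by
  have hu : u ∈ S := hsup u W.start_mem_support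
  have hv : v ∈ S := hsup v W.end_mem_support
  obtain ⟨W', hW'⟩ := walk_lift G W hsup hu hv
  have hd1 : (G.induce S).dist ⟨u, hu⟩ ⟨v, hv⟩ ≤ G.dist u v := by
    rw [← hlen, ← hW']
    exact SimpleGraph.dist_le W'
  have hd2 : G.dist u v ≤ (G.induce S).dist ⟨u, hu⟩ ⟨v, hv⟩ := by
    obtain ⟨P, hP⟩ := W'.reachable.exists_walk_length_eq_dist
    obtain ⟨P', hP'⟩ := walk_proj G P
    rw [← hP, ← hP']
    exact SimpleGraph.dist_le P'
  have hdeq : (G.induce S).dist ⟨u, hu⟩ ⟨v, hv⟩ = G.dist u v := le_antisymm hd1 hd2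
  rcases hGS ⟨u, hu⟩ ⟨v, hv⟩ (by rw [hdeq]; exact hl) (by rw [hdeq]; exact hle) with
    ⟨y, hygate, hHS⟩ | ⟨y, hygate, hHS⟩
  · left
    obtain ⟨hyadj, hyd⟩ := hygate
    have hyG : G.Adj u y.val := hyadj
    rw [hdeq] at hyd
    have hne0 : (G.induce S).dist y ⟨v, hv⟩ ≠ 0 := by omega
    obtain ⟨Py, hPy⟩ := SimpleGraph.exists_walk_of_dist_ne_zero hne0
    obtain ⟨Py', hPy'⟩ := walk_proj G Py
    have hdle : G.dist y.val v ≤ G.dist u v - 1 := by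
      rw [← hyd, ← hPy, ← hPy']
      exact SimpleGraph.dist_le Py'
    refine ⟨y.val, mem_gate G hyG Py'.reachable (by omega), hu, y.2, hHS⟩
  · right
    obtain ⟨hyadj, hyd⟩ := hygate
    have hyG : G.Adj v y.val := hyadj
    have hcomm : (G.induce S).dist ⟨v, hv⟩ ⟨u, hu⟩ = G.dist u v :=
      SimpleGraph.dist_comm.trans hdeq
    rw [hcomm] at hyd
    have hne0 : (G.induce S).dist y ⟨u, hu⟩ ≠ 0 := by omega
    obtain ⟨Py, hPy⟩ := SimpleGraph.exists_walk_of_dist_ne_zero hne0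
    obtain ⟨Py', hPy'⟩ := walk_proj G Py
    have hdle : G.dist y.val u ≤ G.dist u v - 1 := by
      rw [← hyd, ← hPy, ← hPy']
      exact SimpleGraph.dist_le Py'
    have hvu : G.dist v u = G.dist u v := SimpleGraph.dist_comm
    refine ⟨y.val, mem_gate G hyG Py'.reachable (by omega), hv, y.2, hHS⟩

end PartitionWG

/-- Let `r` be a positive integer or `∞`, and `(A, Aᶜ)` a vertex partition of `G` whose
cross-equivalence `≡_{(A,Aᶜ)}` has (at most) `k` classes.  If the induced subgraphs on `A`
and `Aᶜ` each have a weak `r`-guidance system of maximum outdegree at most `c`, then `G`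
has a weak `r`-guidance system of maximum outdegree at most `c + k`. -/
theorem partition_weakGuidance {V : Type*} [Fintype V] (G : SimpleGraph V) (r : ℕ∞)
    (hr : 1 ≤ r) (A : Set V) (k c : ℕ)
    (hk : ∃ f : V → Fin k, ∀ u v, (crossEquiv G A u v ↔ f u = f v))
    (hA : ∃ HA : ↥A → ↥A → Prop, IsPartialOrientation (G.induce A) HA ∧
      IsWeakGuidanceGateE (G.induce A) HA r ∧ ∀ u, outdeg HA u ≤ c)
    (hB : ∃ HB : ↥(Aᶜ) → ↥(Aᶜ) → Prop, IsPartialOrientation (G.induce Aᶜ) HB ∧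
      IsWeakGuidanceGateE (G.induce Aᶜ) HB r ∧ ∀ u, outdeg HB u ≤ c) :
    ∃ H : V → V → Prop, IsPartialOrientation G H ∧ IsWeakGuidanceGateE G H r ∧
      ∀ u, outdeg H u ≤ c + k := by
  classical
  obtain ⟨f, hf⟩ := hk
  obtain ⟨HA, hPA, hGA, hDA⟩ := hA
  obtain ⟨HB, hPB, hGB, hDB⟩ := hB
  refine ⟨fun u w => (∃ (hu : u ∈ A) (hw : w ∈ A), HA ⟨u, hu⟩ ⟨w, hw⟩) ∨
      (∃ (hu : u ∈ Aᶜ) (hw : w ∈ Aᶜ), HB ⟨u, hu⟩ ⟨w, hw⟩) ∨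
      (∃ q, PartitionWG.sig G f u q = some w), ?_, ?_, ?_⟩
  · rintro u w (⟨hu, hw, h⟩ | ⟨hu, hw, h⟩ | ⟨q, h⟩)
    · exact hPA h
    · exact hPB h
    · exact (PartitionWG.sig_good G f h).1
  · intro u v h2 hler
    have hreach : G.Reachable u v := by
      by_contra hnr
      have h0 := SimpleGraph.dist_eq_zero_of_not_reachable hnr
      omega
    obtain ⟨W, hW⟩ := hreach.exists_walk_length_eq_dist
    rcases PartitionWG.walk_decomp G A W with hall | ⟨x, y, W1, W2, hxy, hc, hlen⟩
    · by_cases huA : u ∈ A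
      · have hsup : ∀ z ∈ W.support, z ∈ A := fun z hz => (hall z hz).2 huA
        rcases PartitionWG.side_case G hGA W hsup hW h2 hler with
          ⟨w, hg, hu', hw', hH⟩ | ⟨w, hg, hv', hw', hH⟩
        · exact Or.inl ⟨w, hg, Or.inl ⟨hu', hw', hH⟩⟩
        · exact Or.inr ⟨w, hg, Or.inl ⟨hv', hw', hH⟩⟩
      · have hsup : ∀ z ∈ W.support, z ∈ Aᶜ := fun z hz => by
          simp only [Set.mem_compl_iff]
          intro hzA
          exact huA ((hall z hz).1 hzA)
        rcases PartitionWG.side_case G hGB W hsup hW h2 hler with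
          ⟨w, hg, hu', hw', hH⟩ | ⟨w, hg, hv', hw', hH⟩
        · exact Or.inl ⟨w, hg, Or.inr (Or.inl ⟨hu', hw', hH⟩)⟩
        · exact Or.inr ⟨w, hg, Or.inr (Or.inl ⟨hv', hw', hH⟩)⟩
    · rw [hW] at hlen
      by_cases ht : 1 ≤ W1.length
      · obtain ⟨w, hg, q, hq⟩ := PartitionWG.cross_case G f hf W1 W2 hxy hc hlen ht h2
        exact Or.inl ⟨w, hg, Or.inr (Or.inr ⟨q, hq⟩)⟩
      · have hvu : G.dist v u = G.dist u v := SimpleGraph.dist_comm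
        have hlen' : W2.reverse.length + 1 + W1.reverse.length = G.dist v u := by
          simp only [SimpleGraph.Walk.length_reverse]
          omega
        have hm : 1 ≤ W2.reverse.length := by
          simp only [SimpleGraph.Walk.length_reverse]
          omega
        obtain ⟨w, hg, q, hq⟩ := PartitionWG.cross_case G f hf W2.reverse W1.reverse
          hxy.symm (fun hi => hc hi.symm) hlen' hm (by omega)
        exact Or.inr ⟨w, hg, Or.inr (Or.inr ⟨q, hq⟩)⟩
  · intro u
    have hE3 : {w | ∃ q, PartitionWG.sig G f u q = some w}.ncard ≤ k := by
      have hsub3 : {w | ∃ q, PartitionWG.sig G f u q = some w} ⊆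
          (fun q => (PartitionWG.sig G f u q).getD u) '' Set.univ := by
        rintro w ⟨q, hq⟩
        refine ⟨q, trivial, ?_⟩
        show (PartitionWG.sig G f u q).getD u = w
        rw [hq]
        rfl
      calc {w | ∃ q, PartitionWG.sig G f u q = some w}.ncard
          ≤ ((fun q => (PartitionWG.sig G f u q).getD u) '' Set.univ).ncard :=
            Set.ncard_le_ncard hsub3 (Set.toFinite _)
        _ ≤ (Set.univ : Set (Fin k)).ncard := Set.ncard_image_le (Set.toFinite _)
        _ = k := by rw [Set.ncard_univ, Nat.card_eq_fintype_card, Fintype.card_fin]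
    have hunion : ∀ (E1 E2 E3 : Set V), E1.ncard ≤ c → E2.ncard = 0 → E3.ncard ≤ k →
        (E1 ∪ E2 ∪ E3).ncard ≤ c + k := by
      intro E1 E2 E3 h1 h2 h3
      calc (E1 ∪ E2 ∪ E3).ncard ≤ (E1 ∪ E2).ncard + E3.ncard := Set.ncard_union_le _ _
        _ ≤ (E1.ncard + E2.ncard) + E3.ncard := by
            exact Nat.add_le_add_right (Set.ncard_union_le _ _) _
        _ ≤ c + k := by omega
    have hmain : ({w | (∃ (hu : u ∈ A) (hw : w ∈ A), HA ⟨u, hu⟩ ⟨w, hw⟩) ∨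
        (∃ (hu : u ∈ Aᶜ) (hw : w ∈ Aᶜ), HB ⟨u, hu⟩ ⟨w, hw⟩) ∨
        (∃ q, PartitionWG.sig G f u q = some w)} : Set V).ncard ≤ c + k := by
      by_cases huA : u ∈ A
      · have heq : {w | (∃ (hu : u ∈ A) (hw : w ∈ A), HA ⟨u, hu⟩ ⟨w, hw⟩) ∨
            (∃ (hu : u ∈ Aᶜ) (hw : w ∈ Aᶜ), HB ⟨u, hu⟩ ⟨w, hw⟩) ∨
            (∃ q, PartitionWG.sig G f u q = some w)} =
            {w | ∃ (hu : u ∈ A) (hw : w ∈ A), HA ⟨u, hu⟩ ⟨w, hw⟩} ∪ (∅ : Set V) ∪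
            {w | ∃ q, PartitionWG.sig G f u q = some w} := by
          ext w
          simp only [Set.mem_setOf_eq, Set.mem_union, Set.mem_empty_iff_false, or_false]
          constructor
          · rintro (h | ⟨hu, _⟩ | h)
            · exact Or.inl h
            · exact absurd huA hu
            · exact Or.inr h
          · rintro (h | h)
            · exact Or.inl h
            · exact Or.inr (Or.inr h)
        rw [heq]
        apply hunion _ _ _ _ (by simp) hE3
        have himg : {w | ∃ (hu : u ∈ A) (hw : w ∈ A), HA ⟨u, hu⟩ ⟨w, hw⟩} =
            Subtype.val '' {w' : ↥A | HA ⟨u, huA⟩ w'} := by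
          ext w
          constructor
          · rintro ⟨hu, hw, h⟩
            exact ⟨⟨w, hw⟩, h, rfl⟩
          · rintro ⟨w', hw', rfl⟩
            exact ⟨huA, w'.2, hw'⟩
        rw [himg, Set.ncard_image_of_injective _ Subtype.val_injective]
        exact hDA ⟨u, huA⟩
      · have huAc : u ∈ Aᶜ := huA
        have heq : {w | (∃ (hu : u ∈ A) (hw : w ∈ A), HA ⟨u, hu⟩ ⟨w, hw⟩) ∨
            (∃ (hu : u ∈ Aᶜ) (hw : w ∈ Aᶜ), HB ⟨u, hu⟩ ⟨w, hw⟩) ∨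
            (∃ q, PartitionWG.sig G f u q = some w)} =
            {w | ∃ (hu : u ∈ Aᶜ) (hw : w ∈ Aᶜ), HB ⟨u, hu⟩ ⟨w, hw⟩} ∪ (∅ : Set V) ∪
            {w | ∃ q, PartitionWG.sig G f u q = some w} := by
          ext w
          simp only [Set.mem_setOf_eq, Set.mem_union, Set.mem_empty_iff_false, or_false]
          constructor
          · rintro (⟨hu, _⟩ | h | h)
            · exact absurd hu huA
            · exact Or.inl h
            · exact Or.inr h
          · rintro (h | h)
            · exact Or.inr (Or.inl h)
            · exact Or.inr (Or.inr h)
        rw [heq]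
        apply hunion _ _ _ _ (by simp) hE3
        have himg : {w | ∃ (hu : u ∈ Aᶜ) (hw : w ∈ Aᶜ), HB ⟨u, hu⟩ ⟨w, hw⟩} =
            Subtype.val '' {w' : ↥(Aᶜ) | HB ⟨u, huAc⟩ w'} := by
          ext w
          constructor
          · rintro ⟨hu, hw, h⟩
            exact ⟨⟨w, hw⟩, h, rfl⟩
          · rintro ⟨w', hw', rfl⟩
            exact ⟨huAc, w'.2, hw'⟩
        rw [himg, Set.ncard_image_of_injective _ Subtype.val_injective]
        exact hDB ⟨u, huAc⟩
    exact hmain
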